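/- Let h : [0,1] → [0,1] be a strictly increasing bijection, and for n ∈ ℕ let G_n = ⋃_{i<2^n} [(2i+1)/2^{n+1}, (2i+2)/2^{n+1}] be the union of the intervals good at n. If there are infinitely many n ∈ ℕ such that h``G_n = G_n, then h is the identity map on [0,1]. -/
import Mathlib


/-- The closed interval good at `n` with index `i`. -/
noncomputable def goodInterval (n i : ℕ) : Set ℝ :=
  Set.Icc ((2 * i + 1 : ℝ) / 2 ^ (n + 1)) ((2 * i + 2 : ℝ) / 2 ^ (n + 1))

namespace Stmt15

open Set

def Gset (n : ℕ) : Set ℝ := ⋃ i < 2 ^ n, goodInterval n i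

lemma two_pow_pos (n : ℕ) : (0:ℝ) < 2 ^ (n + 1) := by positivity

lemma mem_Gset {n : ℕ} {x : ℝ} : x ∈ Gset n ↔
    ∃ i : ℕ, i < 2 ^ n ∧ (2 * (i:ℝ) + 1) / 2 ^ (n + 1) ≤ x ∧ x ≤ (2 * (i:ℝ) + 2) / 2 ^ (n + 1) := by
  simp only [Gset, goodInterval, Set.mem_iUnion, Set.mem_Icc]
  tauto

lemma Gset_subset_Icc (n : ℕ) : Gset n ⊆ Icc (0:ℝ) 1 := by
  intro x hx
  obtain ⟨i, hi, h1, h2⟩ := mem_Gset.mp hx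
  have hp := two_pow_pos n
  constructor
  · have h0 : (0:ℝ) ≤ (2 * i + 1 : ℝ) / 2 ^ (n + 1) := by positivity
    linarith
  · have hnat : 2 * i + 2 ≤ 2 ^ (n + 1) := by rw [pow_succ]; omega
    have hcast : (2 * (i:ℝ) + 2) ≤ 2 ^ (n + 1) := by exact_mod_cast hnat
    have : (2 * (i:ℝ) + 2) / 2 ^ (n+1) ≤ 1 := by rw [div_le_one hp]; exact hcast
    linarith

/-- left endpoints, order-theoretically -/
def LEnd (n : ℕ) : Set ℝ :=
  {x | x ∈ Gset n ∧ ∃ y ∈ Icc (0:ℝ) 1, y < x ∧ Ioo y x ∩ Gset n = ∅}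

/-- right endpoints, order-theoretically (plus the point 1) -/
def REnd (n : ℕ) : Set ℝ :=
  {x | x ∈ Gset n ∧ (x = 1 ∨ ∃ y ∈ Icc (0:ℝ) 1, x < y ∧ Ioo x y ∩ Gset n = ∅)}

lemma fix_top (f : ℝ → ℝ) (hmono : StrictMonoOn f (Icc 0 1))
    (hbij : BijOn f (Icc 0 1) (Icc 0 1)) : f 1 = 1 := by
  have h1 : f 1 ∈ Icc (0:ℝ) 1 := hbij.mapsTo (by norm_num)
  obtain ⟨y, hy, hfy⟩ := hbij.surjOn (show (1:ℝ) ∈ Icc (0:ℝ) 1 by norm_num)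
  rcases lt_or_eq_of_le hy.2 with hlt | heq
  · have := hmono hy (by norm_num : (1:ℝ) ∈ Icc (0:ℝ) 1) hlt
    rw [hfy] at this
    exact absurd (lt_of_lt_of_le this h1.2) (lt_irrefl _)
  · subst heq; exact hfy

lemma fix_bot (f : ℝ → ℝ) (hmono : StrictMonoOn f (Icc 0 1))
    (hbij : BijOn f (Icc 0 1) (Icc 0 1)) : f 0 = 0 := by
  have h1 : f 0 ∈ Icc (0:ℝ) 1 := hbij.mapsTo (by norm_num)
  obtain ⟨y, hy, hfy⟩ := hbij.surjOn (show (0:ℝ) ∈ Icc (0:ℝ) 1 by norm_num)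
  rcases lt_or_eq_of_le hy.1 with hlt | heq
  · have := hmono (by norm_num : (0:ℝ) ∈ Icc (0:ℝ) 1) hy hlt
    rw [hfy] at this
    exact absurd (lt_of_le_of_lt h1.1 this) (lt_irrefl _)
  · subst heq; exact hfy

lemma image_LEnd_subset (n : ℕ) (f : ℝ → ℝ) (hmono : StrictMonoOn f (Icc 0 1))
    (hbij : BijOn f (Icc 0 1) (Icc 0 1)) (hG : f '' Gset n = Gset n) :
    f '' LEnd n ⊆ LEnd n := by
  rintro _ ⟨x, ⟨hxG, y, hy, hyx, hsep⟩, rfl⟩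
  have hxI : x ∈ Icc (0:ℝ) 1 := Gset_subset_Icc n hxG
  refine ⟨by rw [← hG]; exact mem_image_of_mem f hxG,
    f y, hbij.mapsTo hy, hmono hy hxI hyx, ?_⟩
  rw [eq_empty_iff_forall_notMem]
  rintro z ⟨⟨hz1, hz2⟩, hzG⟩
  rw [← hG] at hzG
  obtain ⟨w, hwG, rfl⟩ := hzG
  have hwI : w ∈ Icc (0:ℝ) 1 := Gset_subset_Icc n hwG
  have h1 : y < w := (hmono.lt_iff_lt hy hwI).mp hz1
  have h2 : w < x := (hmono.lt_iff_lt hwI hxI).mp hz2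
  exact (eq_empty_iff_forall_notMem.mp hsep) w ⟨⟨h1, h2⟩, hwG⟩

lemma image_REnd_subset (n : ℕ) (f : ℝ → ℝ) (hmono : StrictMonoOn f (Icc 0 1))
    (hbij : BijOn f (Icc 0 1) (Icc 0 1)) (hG : f '' Gset n = Gset n) :
    f '' REnd n ⊆ REnd n := by
  rintro _ ⟨x, ⟨hxG, hrest⟩, rfl⟩
  have hxI : x ∈ Icc (0:ℝ) 1 := Gset_subset_Icc n hxG
  refine ⟨by rw [← hG]; exact mem_image_of_mem f hxG, ?_⟩
  rcases hrest with rfl | ⟨y, hy, hxy, hsep⟩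
  · left; exact fix_top f hmono hbij
  · right
    refine ⟨f y, hbij.mapsTo hy, hmono hxI hy hxy, ?_⟩
    rw [eq_empty_iff_forall_notMem]
    rintro z ⟨⟨hz1, hz2⟩, hzG⟩
    rw [← hG] at hzG
    obtain ⟨w, hwG, rfl⟩ := hzG
    have hwI : w ∈ Icc (0:ℝ) 1 := Gset_subset_Icc n hwG
    have h1 : x < w := (hmono.lt_iff_lt hxI hwI).mp hz1
    have h2 : w < y := (hmono.lt_iff_lt hwI hy).mp hz2
    exact (eq_empty_iff_forall_notMem.mp hsep) w ⟨⟨h1, h2⟩, hwG⟩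

lemma exists_inverse (f : ℝ → ℝ) (hmono : StrictMonoOn f (Icc 0 1))
    (hbij : BijOn f (Icc 0 1) (Icc 0 1)) :
    ∃ g : ℝ → ℝ, BijOn g (Icc 0 1) (Icc 0 1) ∧ StrictMonoOn g (Icc 0 1) ∧
      (∀ x ∈ Icc (0:ℝ) 1, g (f x) = x) ∧ (∀ x ∈ Icc (0:ℝ) 1, f (g x) = x) := by
  have hInv := hbij.invOn_invFunOn
  set g := Function.invFunOn f (Icc 0 1) with hg
  have gbij : BijOn g (Icc 0 1) (Icc 0 1) := Set.BijOn.symm hInv.symm hbij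
  refine ⟨g, gbij, ?_, hInv.1, hInv.2⟩
  intro u hu v hv huv
  by_contra hc
  push_neg at hc
  have : f (g v) ≤ f (g u) := hmono.monotoneOn (gbij.mapsTo hv) (gbij.mapsTo hu) hc
  rw [hInv.2 hu, hInv.2 hv] at this
  exact absurd (lt_of_lt_of_le huv this) (lt_irrefl _)

lemma inv_image_G {n : ℕ} {f g : ℝ → ℝ} (hG : f '' Gset n = Gset n)
    (hgf : ∀ x ∈ Icc (0:ℝ) 1, g (f x) = x) : g '' Gset n = Gset n := by
  ext z
  constructor
  · rintro ⟨w, hwG, rfl⟩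
    rw [← hG] at hwG
    obtain ⟨u, huG, rfl⟩ := hwG
    rw [hgf u (Gset_subset_Icc n huG)]; exact huG
  · intro hz
    have hfz : f z ∈ Gset n := by rw [← hG]; exact mem_image_of_mem f hz
    exact ⟨f z, hfz, hgf z (Gset_subset_Icc n hz)⟩

lemma image_LEnd (n : ℕ) (f : ℝ → ℝ) (hmono : StrictMonoOn f (Icc 0 1))
    (hbij : BijOn f (Icc 0 1) (Icc 0 1)) (hG : f '' Gset n = Gset n) :
    f '' LEnd n = LEnd n := by
  obtain ⟨g, gbij, gmono, hgf, hfg⟩ := exists_inverse f hmono hbij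
  apply Subset.antisymm (image_LEnd_subset n f hmono hbij hG)
  intro x hx
  have hx' : g x ∈ LEnd n :=
    image_LEnd_subset n g gmono gbij (inv_image_G hG hgf) ⟨x, hx, rfl⟩
  exact ⟨g x, hx', hfg x (Gset_subset_Icc n hx.1)⟩

lemma image_REnd (n : ℕ) (f : ℝ → ℝ) (hmono : StrictMonoOn f (Icc 0 1))
    (hbij : BijOn f (Icc 0 1) (Icc 0 1)) (hG : f '' Gset n = Gset n) :
    f '' REnd n = REnd n := by
  obtain ⟨g, gbij, gmono, hgf, hfg⟩ := exists_inverse f hmono hbij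
  apply Subset.antisymm (image_REnd_subset n f hmono hbij hG)
  intro x hx
  have hx' : g x ∈ REnd n :=
    image_REnd_subset n g gmono gbij (inv_image_G hG hgf) ⟨x, hx, rfl⟩
  exact ⟨g x, hx', hfg x (Gset_subset_Icc n hx.1)⟩

lemma mem_LEnd {n : ℕ} {x : ℝ} :
    x ∈ LEnd n ↔ ∃ i : ℕ, i < 2 ^ n ∧ x = (2 * (i:ℝ) + 1) / 2 ^ (n + 1) := by
  have hp := two_pow_pos n
  constructor
  · rintro ⟨hxG, y, hy, hyx, hsep⟩
    obtain ⟨i, hi, h1, h2⟩ := mem_Gset.mp hxG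
    refine ⟨i, hi, ?_⟩
    by_contra hne
    have hax : (2 * (i:ℝ) + 1) / 2 ^ (n + 1) < x := lt_of_le_of_ne h1 (Ne.symm hne)
    obtain ⟨z, hz1, hz2⟩ := exists_between (max_lt hyx hax)
    have hzG : z ∈ Gset n := mem_Gset.mpr ⟨i, hi,
      le_of_lt (lt_of_le_of_lt (le_max_right y _) hz1), le_trans (le_of_lt hz2) h2⟩
    exact (eq_empty_iff_forall_notMem.mp hsep) z
      ⟨⟨lt_of_le_of_lt (le_max_left y _) hz1, hz2⟩, hzG⟩
  · rintro ⟨i, hi, rfl⟩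
    have hG : (2 * (i:ℝ) + 1) / 2 ^ (n + 1) ∈ Gset n :=
      mem_Gset.mpr ⟨i, hi, le_refl _, (div_le_div_iff_of_pos_right hp).mpr (by linarith)⟩
    refine ⟨hG, (2 * (i:ℝ)) / 2 ^ (n + 1), ?_, ?_, ?_⟩
    · constructor
      · positivity
      · have hnat : 2 * i ≤ 2 ^ (n + 1) := by rw [pow_succ]; omega
        rw [div_le_one hp]; exact_mod_cast hnat
    · exact (div_lt_div_iff_of_pos_right hp).mpr (by linarith)
    · rw [eq_empty_iff_forall_notMem]
      rintro z ⟨⟨hz1, hz2⟩, hzG⟩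
      obtain ⟨j, hj, hj1, hj2⟩ := mem_Gset.mp hzG
      rw [div_lt_iff₀ hp] at hz1
      rw [lt_div_iff₀ hp] at hz2
      rw [div_le_iff₀ hp] at hj1
      have hji : (j:ℝ) < i := by linarith
      have hij : (i:ℝ) < j + 1 := by
        rw [le_div_iff₀ hp] at hj2
        linarith
      have h1 : j < i := by exact_mod_cast hji
      have h2 : i < j + 1 := by exact_mod_cast hij
      omega

lemma mem_REnd {n : ℕ} {x : ℝ} :
    x ∈ REnd n ↔ ∃ i : ℕ, i < 2 ^ n ∧ x = (2 * (i:ℝ) + 2) / 2 ^ (n + 1) := by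
  have hp := two_pow_pos n
  have hone : ((2 * ((2 ^ n - 1 : ℕ):ℝ) + 2) / 2 ^ (n + 1)) = 1 := by
    rw [div_eq_one_iff_eq (ne_of_gt hp)]
    have h1 : ((2 ^ n - 1 : ℕ):ℝ) = 2 ^ n - 1 := by
      push_cast [Nat.cast_sub (Nat.one_le_two_pow)]
      ring
    rw [h1, pow_succ]
    ring
  constructor
  · rintro ⟨hxG, hrest⟩
    obtain ⟨i, hi, h1, h2⟩ := mem_Gset.mp hxG
    rcases hrest with rfl | ⟨y, hy, hxy, hsep⟩
    · exact ⟨2 ^ n - 1, by omega, hone.symm⟩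
    · refine ⟨i, hi, ?_⟩
      by_contra hne
      have hax : x < (2 * (i:ℝ) + 2) / 2 ^ (n + 1) := lt_of_le_of_ne h2 hne
      obtain ⟨z, hz1, hz2⟩ := exists_between (lt_min hxy hax)
      have hzG : z ∈ Gset n := mem_Gset.mpr ⟨i, hi,
        le_trans h1 (le_of_lt hz1), le_of_lt (lt_of_lt_of_le hz2 (min_le_right y _))⟩
      exact (eq_empty_iff_forall_notMem.mp hsep) z
        ⟨⟨hz1, lt_of_lt_of_le hz2 (min_le_left y _)⟩, hzG⟩
  · rintro ⟨i, hi, rfl⟩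
    have hG : (2 * (i:ℝ) + 2) / 2 ^ (n + 1) ∈ Gset n :=
      mem_Gset.mpr ⟨i, hi, (div_le_div_iff_of_pos_right hp).mpr (by linarith), le_refl _⟩
    refine ⟨hG, ?_⟩
    rcases eq_or_lt_of_le (Nat.succ_le_of_lt hi) with heq | hlt
    · left
      have : i = 2 ^ n - 1 := by omega
      rw [this, hone]
    · right
      refine ⟨(2 * (i:ℝ) + 3) / 2 ^ (n + 1), ?_, ?_, ?_⟩
      · constructor
        · positivity
        · have hnat : 2 * i + 3 ≤ 2 ^ (n + 1) := by rw [pow_succ]; omega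
          rw [div_le_one hp]
          push_cast
          exact_mod_cast hnat
      · exact (div_lt_div_iff_of_pos_right hp).mpr (by linarith)
      · rw [eq_empty_iff_forall_notMem]
        rintro z ⟨⟨hz1, hz2⟩, hzG⟩
        obtain ⟨j, hj, hj1, hj2⟩ := mem_Gset.mp hzG
        rw [div_lt_iff₀ hp] at hz1
        rw [lt_div_iff₀ hp] at hz2
        rw [div_le_iff₀ hp] at hj1
        rw [le_div_iff₀ hp] at hj2
        have hji : (j:ℝ) < i + 1 := by linarith
        have hij : (i:ℝ) < j := by linarith
        have h1 : j < i + 1 := by exact_mod_cast hji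
        have h2 : i < j := by exact_mod_cast hij
        omega

/-- finite set fixed pointwise by strictly monotone self-bijection -/
lemma finset_fix (f : ℝ → ℝ) :
    ∀ S : Finset ℝ, (∀ x ∈ S, ∀ y ∈ S, x < y → f x < f y) → Finset.image f S = S →
      ∀ x ∈ S, f x = x := by
  intro S
  induction S using Finset.strongInduction with
  | _ S ih =>
    intro hmono himg x hx
    have hinj : ∀ a ∈ S, ∀ b ∈ S, f a = f b → a = b := by
      intro a ha b hb hab
      rcases lt_trichotomy a b with hlt | heq | hgt
      · exact absurd (hmono a ha b hb hlt) (by rw [hab]; exact lt_irrefl _)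
      · exact heq
      · exact absurd (hmono b hb a ha hgt) (by rw [hab]; exact lt_irrefl _)
    have hne : S.Nonempty := ⟨x, hx⟩
    have hMS : S.max' hne ∈ S := S.max'_mem hne
    set M := S.max' hne with hM
    have hfM : f M = M := by
      have h1 : f M ∈ S := by rw [← himg]; exact Finset.mem_image_of_mem f hMS
      have h2 : f M ≤ M := Finset.le_max' S _ h1
      have h3 : M ∈ Finset.image f S := by rw [himg]; exact hMS
      obtain ⟨y, hy, hfy⟩ := Finset.mem_image.mp h3
      rcases lt_or_eq_of_le (Finset.le_max' S y hy) with hlt | heq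
      · have := hmono y hy M hMS hlt
        rw [hfy] at this
        exact absurd (lt_of_lt_of_le this h2) (lt_irrefl _)
      · rw [← hM] at heq; rw [heq] at hfy; exact hfy
    rcases eq_or_ne x M with rfl | hxM
    · exact hfM
    · have hxE : x ∈ S.erase M := Finset.mem_erase.mpr ⟨hxM, hx⟩
      have himg' : Finset.image f (S.erase M) = S.erase M := by
        ext z
        simp only [Finset.mem_image, Finset.mem_erase]
        constructor
        · rintro ⟨y, ⟨hyM, hyS⟩, rfl⟩
          refine ⟨fun hzM => hyM (hinj y hyS M hMS (hzM.trans hfM.symm)), ?_⟩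
          rw [← himg]; exact Finset.mem_image_of_mem f hyS
        · rintro ⟨hzM, hzS⟩
          have : z ∈ Finset.image f S := by rw [himg]; exact hzS
          obtain ⟨y, hyS, rfl⟩ := Finset.mem_image.mp this
          exact ⟨y, ⟨fun hh => hzM (by rw [hh, hfM]), hyS⟩, rfl⟩
      exact ih (S.erase M) (Finset.erase_ssubset hMS)
        (fun a ha b hb => hmono a (Finset.mem_of_mem_erase ha) b (Finset.mem_of_mem_erase hb))
        himg' x hxE

lemma fix_on_finset (f : ℝ → ℝ) (hmono : StrictMonoOn f (Icc 0 1)) (S : Finset ℝ)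
    (hsub : (S : Set ℝ) ⊆ Icc (0:ℝ) 1) (himg : f '' (S : Set ℝ) = (S : Set ℝ)) :
    ∀ x ∈ S, f x = x := by
  have h1 : Finset.image f S = S := by
    apply Finset.coe_injective
    rw [Finset.coe_image]
    exact himg
  exact finset_fix f S (fun a ha b hb hab => hmono (hsub ha) (hsub hb) hab) h1

/-- all dyadic endpoints at level `n+1` are fixed -/
lemma fix_endpoints (n : ℕ) (f : ℝ → ℝ) (hmono : StrictMonoOn f (Icc 0 1))
    (hbij : BijOn f (Icc 0 1) (Icc 0 1)) (hG : f '' Gset n = Gset n) :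
    ∀ k : ℕ, k ≤ 2 ^ (n + 1) → f ((k:ℝ) / 2 ^ (n + 1)) = (k:ℝ) / 2 ^ (n + 1) := by
  have hLcoe : ((Finset.range (2 ^ n)).image (fun i : ℕ => (2 * (i:ℝ) + 1) / 2 ^ (n + 1)) : Set ℝ)
      = LEnd n := by
    ext z
    simp only [Finset.coe_image, Finset.coe_range, Set.mem_image, Set.mem_Iio, mem_LEnd]
    constructor
    · rintro ⟨i, hi, rfl⟩; exact ⟨i, hi, rfl⟩
    · rintro ⟨i, hi, rfl⟩; exact ⟨i, hi, rfl⟩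
  have hRcoe : ((Finset.range (2 ^ n)).image (fun i : ℕ => (2 * (i:ℝ) + 2) / 2 ^ (n + 1)) : Set ℝ)
      = REnd n := by
    ext z
    simp only [Finset.coe_image, Finset.coe_range, Set.mem_image, Set.mem_Iio, mem_REnd]
    constructor
    · rintro ⟨i, hi, rfl⟩; exact ⟨i, hi, rfl⟩
    · rintro ⟨i, hi, rfl⟩; exact ⟨i, hi, rfl⟩
  have hLsub : (LEnd n : Set ℝ) ⊆ Icc (0:ℝ) 1 := fun z hz => Gset_subset_Icc n hz.1
  have hRsub : (REnd n : Set ℝ) ⊆ Icc (0:ℝ) 1 := fun z hz => Gset_subset_Icc n hz.1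
  have hLfix := fix_on_finset f hmono _ (hLcoe ▸ hLsub) (by rw [hLcoe]; exact image_LEnd n f hmono hbij hG)
  have hRfix := fix_on_finset f hmono _ (hRcoe ▸ hRsub) (by rw [hRcoe]; exact image_REnd n f hmono hbij hG)
  intro k hk
  rcases Nat.eq_zero_or_pos k with rfl | hk0
  · simpa using fix_bot f hmono hbij
  · rcases Nat.even_or_odd k with ⟨i, hki⟩ | ⟨i, hki⟩
    · -- k = 2i = 2(i-1)+2, with i ≥ 1
      have hi1 : 1 ≤ i := by omega
      have hieq : k = 2 * (i - 1) + 2 := by omega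
      have hilt : i - 1 < 2 ^ n := by
        have : k ≤ 2 ^ (n+1) := hk
        rw [pow_succ] at this
        omega
      have hmem : ((k:ℝ) / 2 ^ (n + 1)) ∈
          ((Finset.range (2 ^ n)).image (fun i : ℕ => (2 * (i:ℝ) + 2) / 2 ^ (n + 1))) := by
        apply Finset.mem_image.mpr
        refine ⟨i - 1, Finset.mem_range.mpr hilt, ?_⟩
        congr 1
        rw [hieq]
        push_cast [Nat.cast_sub hi1]
        ring
      exact hRfix _ hmem
    · -- k = 2i+1
      have hilt : i < 2 ^ n := by
        have : k ≤ 2 ^ (n+1) := hk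
        rw [pow_succ] at this
        omega
      have hmem : ((k:ℝ) / 2 ^ (n + 1)) ∈
          ((Finset.range (2 ^ n)).image (fun i : ℕ => (2 * (i:ℝ) + 1) / 2 ^ (n + 1))) := by
        apply Finset.mem_image.mpr
        refine ⟨i, Finset.mem_range.mpr hilt, ?_⟩
        congr 1
        rw [hki]
        push_cast
        ring
      exact hLfix _ hmem

end Stmt15

/-- if a strictly increasing bijection `h` of `[0,1]` onto itself
satisfies `h``G_n = G_n` for infinitely many `n`, where `G_n` is the union of
the intervals good at `n`, then `h` is the identity on `[0,1]`. -/
theorem stmt15 (h : ℝ → ℝ)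
    (hmono : StrictMonoOn h (Set.Icc (0 : ℝ) 1))
    (hbij : Set.BijOn h (Set.Icc (0 : ℝ) 1) (Set.Icc (0 : ℝ) 1))
    (hinf : {n : ℕ |
      h '' (⋃ i < 2 ^ n, goodInterval n i) = ⋃ i < 2 ^ n, goodInterval n i}.Infinite) :
    ∀ x ∈ Set.Icc (0 : ℝ) 1, h x = x := by
  intro x hx
  rcases eq_or_lt_of_le hx.2 with heq | hlt
  · rw [heq]; exact Stmt15.fix_top h hmono hbij
  · have habs : ∀ ε > 0, |h x - x| ≤ 0 + ε := by
      intro ε hε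
      obtain ⟨m, hm⟩ := exists_pow_lt_of_lt_one hε (by norm_num : (1/2:ℝ) < 1)
      obtain ⟨n, hnS, hnm⟩ := hinf.exists_gt m
      have hG : h '' Stmt15.Gset n = Stmt15.Gset n := hnS
      have key := Stmt15.fix_endpoints n h hmono hbij hG
      have hp := Stmt15.two_pow_pos n
      set k := ⌊x * 2 ^ (n+1)⌋₊ with hkdef
      have hx0 : (0:ℝ) ≤ x * 2 ^ (n+1) := by
        have := hx.1; positivity
      have hk1 : (k:ℝ) ≤ x * 2 ^ (n+1) := Nat.floor_le hx0
      have hk2 : x * 2 ^ (n+1) < (k:ℝ) + 1 := Nat.lt_floor_add_one _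
      have hkle : k + 1 ≤ 2 ^ (n+1) := by
        have hr : (k:ℝ) < 2 ^ (n+1) := lt_of_le_of_lt hk1 (by nlinarith)
        have hn : k < 2 ^ (n+1) := by exact_mod_cast hr
        omega
      have e1 := key k (le_trans (Nat.le_succ k) hkle)
      have e2 := key (k+1) hkle
      have hxk : (k:ℝ) / 2 ^ (n+1) ≤ x := (div_le_iff₀ hp).mpr hk1
      have hxk1 : x ≤ ((k:ℝ)+1) / 2 ^ (n+1) := (le_div_iff₀ hp).mpr (le_of_lt hk2)
      have hmem : ∀ j : ℕ, j ≤ 2 ^ (n+1) → ((j:ℝ) / 2 ^ (n+1)) ∈ Set.Icc (0:ℝ) 1 := by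
        intro j hj
        constructor
        · positivity
        · rw [div_le_one hp]; exact_mod_cast hj
      have b1 : (k:ℝ) / 2 ^ (n+1) ≤ h x := by
        calc (k:ℝ) / 2 ^ (n+1) = h ((k:ℝ) / 2 ^ (n+1)) := e1.symm
          _ ≤ h x := hmono.monotoneOn (hmem k (le_trans (Nat.le_succ k) hkle)) hx hxk
      have b2 : h x ≤ ((k:ℝ)+1) / 2 ^ (n+1) := by
        have e2' : h (((k:ℝ)+1) / 2 ^ (n+1)) = ((k:ℝ)+1) / 2 ^ (n+1) := by
          have : (((k+1:ℕ)):ℝ) = (k:ℝ)+1 := by push_cast; ring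
          rw [← this]; exact e2
        calc h x ≤ h (((k:ℝ)+1) / 2 ^ (n+1)) := by
              have hmem' : (((k:ℝ)+1) / 2 ^ (n+1)) ∈ Set.Icc (0:ℝ) 1 := by
                have := hmem (k+1) hkle
                push_cast at this
                exact this
              exact hmono.monotoneOn hx hmem' hxk1
          _ = ((k:ℝ)+1) / 2 ^ (n+1) := e2'
      have hsmall : (1:ℝ) / 2 ^ (n+1) ≤ ε := by
        have h2m : (2:ℝ) ^ m ≤ 2 ^ (n+1) := pow_le_pow_right₀ (by norm_num) (by omega)
        have hd : (1:ℝ) / 2 ^ (n+1) ≤ 1 / 2 ^ m :=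
          one_div_le_one_div_of_le (by positivity) h2m
        have hm' : (1:ℝ) / 2 ^ m < ε := by
          rw [div_pow] at hm
          simpa using hm
        linarith
      have hdiff : ((k:ℝ)+1) / 2 ^ (n+1) - (k:ℝ) / 2 ^ (n+1) = 1 / 2 ^ (n+1) := by ring
      rw [zero_add, abs_sub_le_iff]
      constructor <;> linarith
    have h0 : |h x - x| ≤ 0 := le_of_forall_pos_le_add habs
    have : h x - x = 0 := abs_nonpos_iff.mp h0
    linarith
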